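/- If p is a prime with p ≡ 1 (mod 10) or p ≡ 9 (mod 10), then π(p) divides p − 1. -/

import Mathlib

/-- The Pisano period `π(m)`: the least positive integer `k` such that
`F_{n+k} ≡ F_n (mod m)` for all `n ≥ 0`. -/
noncomputable def pisano (m : ℕ) : ℕ :=
  sInf {k : ℕ | 0 < k ∧ ∀ n : ℕ, Nat.fib (n + k) ≡ Nat.fib n [MOD m]}

private lemma fib_period_of_zero_one {m k : ℕ} (h0 : Nat.fib k ≡ 0 [MOD m])
    (h1 : Nat.fib (k + 1) ≡ 1 [MOD m]) :
    ∀ n : ℕ, Nat.fib (n + k) ≡ Nat.fib n [MOD m] := by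
  intro n
  induction n using Nat.twoStepInduction with
  | zero => simpa using h0
  | one => simpa [Nat.add_comm 1 k] using h1
  | more n ih1 ih2 =>
    have e : n + 2 + k = (n + k) + 2 := by ring
    have e2 : n + 1 + k = (n + k) + 1 := by ring
    rw [e2] at ih2
    rw [e, Nat.fib_add_two, Nat.fib_add_two]
    exact Nat.ModEq.add ih1 ih2

private lemma binet (p : ℕ) [Fact p.Prime] (s : ZMod p) (hs : s ^ 2 = 5) :
    ∀ n : ℕ, (2 : ZMod p) ^ n * s * (Nat.fib n : ZMod p)
      = (1 + s) ^ n - (1 - s) ^ n := by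
  intro n
  induction n using Nat.twoStepInduction with
  | zero => simp
  | one => simp; ring
  | more n ih1 ih2 =>
    rw [Nat.fib_add_two]
    push_cast
    have ea : (1 + s) ^ (n + 2) = (6 + 2 * s) * (1 + s) ^ n := by
      have h2 : (1 + s) ^ (n + 2) = (1 + s) ^ n * (1 + s) ^ 2 := by ring
      rw [h2]; linear_combination (1 + s) ^ n * hs
    have eb : (1 - s) ^ (n + 2) = (6 - 2 * s) * (1 - s) ^ n := by
      have h2 : (1 - s) ^ (n + 2) = (1 - s) ^ n * (1 - s) ^ 2 := by ring
      rw [h2]; linear_combination (1 - s) ^ n * hs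
    rw [ea, eb]
    have ha : (1 + s) ^ (n + 1) = (1 + s) ^ n * (1 + s) := by ring
    have hb : (1 - s) ^ (n + 1) = (1 - s) ^ n * (1 - s) := by ring
    rw [ha, hb] at ih2
    linear_combination (4 : ZMod p) * ih1 + 2 * ih2

/-- if `p` is a prime with `p ≡ ±1 (mod 10)`, then `π(p) ∣ p - 1`. -/
theorem pisano_dvd_sub_one (p : ℕ) (hp : p.Prime)
    (h : p % 10 = 1 ∨ p % 10 = 9) :
    pisano p ∣ p - 1 := by
  haveI : Fact p.Prime := ⟨hp⟩
  have hp2 : p ≠ 2 := by rintro rfl; simp at h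
  have hp5 : p ≠ 5 := by rintro rfl; simp at h
  have hp3 : 3 ≤ p := by
    rcases hp.two_le.lt_or_eq with h' | h'
    · omega
    · omega
  have hp5' : p % 5 = 1 ∨ p % 5 = 4 := by
    have h10 := Nat.mod_mod_of_dvd p (by norm_num : 5 ∣ 10)
    rcases h with h | h <;> omega
  -- 5 is a square mod p
  have hp5ne : ((5 : ℕ) : ZMod p) ≠ 0 := by
    rw [Ne, ZMod.natCast_eq_zero_iff]
    intro hdvd
    exact hp5 ((Nat.prime_dvd_prime_iff_eq hp (by norm_num)).mp hdvd)
  haveI : Fact (Nat.Prime 5) := ⟨by norm_num⟩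
  have hcast5 : ((p : ℤ) : ZMod 5) = ((p : ℕ) : ZMod 5) := by push_cast; ring
  have hpne5 : ((p : ℤ) : ZMod 5) ≠ 0 := by
    rw [hcast5, Ne, ZMod.natCast_eq_zero_iff]
    omega
  have hsq : IsSquare (5 : ZMod p) := by
    have hrec := legendreSym.quadratic_reciprocity_one_mod_four (p := 5) (q := p)
      (by norm_num) hp2
    have hps : legendreSym 5 (p : ℤ) = 1 := by
      rw [legendreSym.eq_one_iff 5 hpne5, hcast5, ← ZMod.natCast_mod p 5]
      rcases hp5' with h5 | h5 <;> rw [h5]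
      exacts [⟨1, rfl⟩, ⟨2, rfl⟩]
    have h1 : legendreSym p ((5 : ℕ) : ℤ) = 1 := hrec.trans hps
    have h5 : (((5 : ℕ) : ℤ) : ZMod p) ≠ 0 := by exact_mod_cast hp5ne
    have := (legendreSym.eq_one_iff p h5).mp h1
    have hc : ((((5 : ℕ) : ℤ)) : ZMod p) = (5 : ZMod p) := by push_cast; ring
    rwa [hc] at this
  obtain ⟨s, hs⟩ := hsq
  have hs2 : s ^ 2 = 5 := by rw [sq]; exact hs.symm
  have h5ne : (5 : ZMod p) ≠ 0 := by exact_mod_cast hp5ne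
  have hsne : s ≠ 0 := by
    intro h0; rw [h0] at hs2; simp at hs2; exact h5ne hs2.symm
  have h2ne : (2 : ZMod p) ≠ 0 := by
    have : ((2 : ℕ) : ZMod p) ≠ 0 := by
      rw [Ne, ZMod.natCast_eq_zero_iff]
      intro hdvd
      exact hp2 ((Nat.prime_dvd_prime_iff_eq hp (by norm_num)).mp hdvd)
    exact_mod_cast this
  have hab : (1 + s) * (1 - s) = -(2 * 2) := by linear_combination -hs2
  have habne : (1 + s) * (1 - s) ≠ 0 := by
    rw [hab]; exact neg_ne_zero.mpr (mul_ne_zero h2ne h2ne)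
  have hane : (1 + s) ≠ 0 := fun h0 => habne (by rw [h0, zero_mul])
  have hbne : (1 - s) ≠ 0 := fun h0 => habne (by rw [h0, mul_zero])
  -- Fermat
  have hfa : (1 + s) ^ (p - 1) = 1 := ZMod.pow_card_sub_one_eq_one hane
  have hfb : (1 - s) ^ (p - 1) = 1 := ZMod.pow_card_sub_one_eq_one hbne
  have hf2 : (2 : ZMod p) ^ (p - 1) = 1 := ZMod.pow_card_sub_one_eq_one h2ne
  -- F_{p-1} ≡ 0 mod p
  have hfib0 : Nat.fib (p - 1) ≡ 0 [MOD p] := by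
    have := binet p s hs2 (p - 1)
    rw [hfa, hfb, hf2, sub_self, one_mul] at this
    have hz : (Nat.fib (p - 1) : ZMod p) = 0 :=
      (mul_eq_zero.mp this).resolve_left hsne
    exact (Nat.modEq_zero_iff_dvd).mpr ((ZMod.natCast_eq_zero_iff _ _).mp hz)
  -- F_p ≡ 1 mod p
  have hfib1 : Nat.fib (p - 1 + 1) ≡ 1 [MOD p] := by
    have hpe : p - 1 + 1 = p := by omega
    have hb := binet p s hs2 p
    have hpa : (1 + s) ^ p = (1 + s) := by
      have h' := pow_succ (1 + s) (p - 1)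
      rw [hpe, hfa, one_mul] at h'
      exact h'
    have hpb : (1 - s) ^ p = (1 - s) := by
      have h' := pow_succ (1 - s) (p - 1)
      rw [hpe, hfb, one_mul] at h'
      exact h'
    have hp2' : (2 : ZMod p) ^ p = 2 := by
      have h' := pow_succ (2 : ZMod p) (p - 1)
      rw [hpe, hf2, one_mul] at h'
      exact h'
    rw [hpa, hpb, hp2'] at hb
    have h2s : (1 + s) - (1 - s) = 2 * s := by ring
    rw [h2s] at hb
    have hfp : (Nat.fib p : ZMod p) = 1 := by
      have hne : (2 : ZMod p) * s ≠ 0 := mul_ne_zero h2ne hsne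
      have hmm : (2 * s) * (Nat.fib p : ZMod p) = (2 * s) * 1 := by
        rw [mul_one]; linear_combination hb
      exact mul_left_cancel₀ hne hmm
    rw [hpe]
    have : ((Nat.fib p : ℕ) : ZMod p) = ((1 : ℕ) : ZMod p) := by
      rw [hfp]; simp
    exact (ZMod.natCast_eq_natCast_iff _ _ _).mp this
  -- p - 1 is a period
  set S : Set ℕ := {k : ℕ | 0 < k ∧ ∀ n : ℕ, Nat.fib (n + k) ≡ Nat.fib n [MOD p]} with hS
  have hmem : (p - 1) ∈ S := by
    refine ⟨by omega, fib_period_of_zero_one hfib0 hfib1⟩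
  have hne : S.Nonempty := ⟨p - 1, hmem⟩
  have hdmem : pisano p ∈ S := Nat.sInf_mem hne
  -- minimal period divides every period
  have hdpos : 0 < pisano p := hdmem.1
  have key : ∀ k, k ∈ S → pisano p ∣ k := by
    intro k
    induction k using Nat.strong_induction_on with
    | _ k ih =>
      intro hk
      have hle : pisano p ≤ k := Nat.sInf_le hk
      rcases eq_or_lt_of_le hle with heq | hlt
      · exact heq ▸ dvd_refl _
      · have hk' : (k - pisano p) ∈ S := by
          refine ⟨by omega, fun n => ?_⟩
          have h1 := hdmem.2 (n + (k - pisano p))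
          have e : n + (k - pisano p) + pisano p = n + k := by omega
          rw [e] at h1
          exact (h1.symm.trans (hk.2 n))
        have := ih (k - pisano p) (by omega) hk'
        have : pisano p ∣ (k - pisano p) + pisano p := Dvd.dvd.add this (dvd_refl _)
        rwa [Nat.sub_add_cancel hle] at this
  exact key (p - 1) hmem
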